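/- In a completely randomized experiment with 2 ≤ N₁ ≤ N−2, the sample variance of the observed outcomes in each treatment group is unbiased for the corresponding finite population variance: for t ∈ {0,1}, E[s_t²] = S_t², where s_t² = (1/(N_t−1))Σ_{i:T_i=t}(Y_i^{obs} − Ȳ_t^{obs})², Ȳ_t^{obs} = (1/N_t)Σ_{i:T_i=t} Y_i^{obs}, and S_t² = (1/(N−1))Σ_{i=1}^N {Y_i(t) − Ȳ_t}² with Ȳ_t = (1/N)Σ_{i=1}^N Y_i(t). -/

import Mathlib

open Finset

noncomputable section

/-- Completely randomized assignments: vectors in `{0,1}^N` with exactly `N₁` ones. -/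
def CRD (N N₁ : ℕ) : Finset (Fin N → Bool) :=
  Finset.univ.filter fun T => (Finset.univ.filter fun i => T i = true).card = N₁

noncomputable def crdExp (N N₁ : ℕ) (f : (Fin N → Bool) → ℝ) : ℝ :=
  (∑ T ∈ CRD N N₁, f T) / ((CRD N N₁).card : ℝ)

/-- Sample mean of the observed outcomes in the treated group
(`Yᵢobs = Yᵢ(1)` there). -/
noncomputable def ybar1obs (N N₁ : ℕ) (Y1 : Fin N → ℝ) (T : Fin N → Bool) : ℝ :=
  (∑ i, if T i then Y1 i else 0) / (N₁ : ℝ)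

/-- Sample mean of the observed outcomes in the control group
(`Yᵢobs = Yᵢ(0)` there). -/
noncomputable def ybar0obs (N N₁ : ℕ) (Y0 : Fin N → ℝ) (T : Fin N → Bool) : ℝ :=
  (∑ i, if T i then 0 else Y0 i) / ((N - N₁ : ℕ) : ℝ)

/-- Sample variance of the observed outcomes in the treated group. -/
noncomputable def s1sq (N N₁ : ℕ) (Y1 : Fin N → ℝ) (T : Fin N → Bool) : ℝ :=
  (∑ i, if T i then (Y1 i - ybar1obs N N₁ Y1 T) ^ 2 else 0) / ((N₁ : ℝ) - 1)

/-- Sample variance of the observed outcomes in the control group. -/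
noncomputable def s0sq (N N₁ : ℕ) (Y0 : Fin N → ℝ) (T : Fin N → Bool) : ℝ :=
  (∑ i, if T i then 0 else (Y0 i - ybar0obs N N₁ Y0 T) ^ 2)
    / (((N - N₁ : ℕ) : ℝ) - 1)



lemma count_one {N k : ℕ} (hk : 1 ≤ k) (i : Fin N) :
    (((univ : Finset (Fin N)).powersetCard k).filter (fun s => i ∈ s)).card
      = (N-1).choose (k-1) := by
  have h1 : (((univ : Finset (Fin N)).erase i).powersetCard (k-1)).card
      = (N-1).choose (k-1) := by
    rw [Finset.card_powersetCard, card_erase_of_mem (mem_univ i), card_univ, Fintype.card_fin]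
  rw [← h1]
  apply Finset.card_nbij' (fun s => s.erase i) (fun t => insert i t)
  · intro s hs
    simp only [mem_coe, mem_filter, mem_powersetCard] at hs
    simp only [mem_coe, mem_powersetCard]
    exact ⟨erase_subset_erase i hs.1.1, by rw [card_erase_of_mem hs.2, hs.1.2]⟩
  · intro t ht
    simp only [mem_coe, mem_powersetCard] at ht
    simp only [mem_coe, mem_filter, mem_powersetCard]
    have hi : i ∉ t := fun h => (mem_erase.mp (ht.1 h)).1 rfl
    refine ⟨⟨subset_univ _, ?_⟩, mem_insert_self _ _⟩
    rw [card_insert_of_notMem hi, ht.2]; omega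
  · intro s hs
    simp only [mem_coe, mem_filter] at hs
    exact insert_erase hs.2
  · intro t ht
    simp only [mem_coe, mem_powersetCard] at ht
    exact erase_insert (fun h => (mem_erase.mp (ht.1 h)).1 rfl)

lemma count_pair {N k : ℕ} (hk : 2 ≤ k) {i j : Fin N} (hij : i ≠ j) :
    (((univ : Finset (Fin N)).powersetCard k).filter (fun s => i ∈ s ∧ j ∈ s)).card
      = (N-2).choose (k-2) := by
  have h1 : ((((univ : Finset (Fin N)).erase i).erase j).powersetCard (k-2)).card
      = (N-2).choose (k-2) := by
    rw [Finset.card_powersetCard, card_erase_of_mem (mem_erase.mpr ⟨hij.symm, mem_univ j⟩),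
      card_erase_of_mem (mem_univ i), card_univ, Fintype.card_fin]
    congr 1
  rw [← h1]
  apply Finset.card_nbij' (fun s => (s.erase i).erase j) (fun t => insert i (insert j t))
  · intro s hs
    simp only [mem_coe, mem_filter, mem_powersetCard] at hs
    simp only [mem_coe, mem_powersetCard]
    refine ⟨erase_subset_erase j (erase_subset_erase i hs.1.1), ?_⟩
    rw [card_erase_of_mem (mem_erase.mpr ⟨hij.symm, hs.2.2⟩), card_erase_of_mem hs.2.1, hs.1.2]
    omega
  · intro t ht
    simp only [mem_coe, mem_powersetCard] at ht
    have hjt : j ∉ t := fun h => (mem_erase.mp (ht.1 h)).1 rfl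
    have hit : i ∉ t := fun h => (mem_erase.mp (mem_of_mem_erase (ht.1 h))).1 rfl
    have hij' : i ∉ insert j t := by simp [hij, hit]
    simp only [mem_coe, mem_filter, mem_powersetCard]
    refine ⟨⟨subset_univ _, ?_⟩, mem_insert_self _ _, mem_insert_of_mem (mem_insert_self _ _)⟩
    rw [card_insert_of_notMem hij', card_insert_of_notMem hjt, ht.2]; omega
  · intro s hs
    simp only [mem_coe, mem_filter] at hs
    beta_reduce
    rw [insert_erase (mem_erase.mpr ⟨hij.symm, hs.2.2⟩), insert_erase hs.2.1]
  · intro t ht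
    simp only [mem_coe, mem_powersetCard] at ht
    have hjt : j ∉ t := fun h => (mem_erase.mp (ht.1 h)).1 rfl
    have hit : i ∉ t := fun h => (mem_erase.mp (mem_of_mem_erase (ht.1 h))).1 rfl
    have hij' : i ∉ insert j t := by simp [hij, hit]
    beta_reduce
    rw [erase_insert hij', erase_insert hjt]

lemma sum_indicator {N : ℕ} (s : Finset (Fin N)) (g : Fin N → ℝ) :
    ∑ i ∈ s, g i = ∑ i : Fin N, if i ∈ s then g i else 0 := by
  rw [Finset.sum_ite_mem, univ_inter]

lemma sum_one {N k : ℕ} (hk : 1 ≤ k) (g : Fin N → ℝ) :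
    ∑ s ∈ (univ : Finset (Fin N)).powersetCard k, ∑ i ∈ s, g i
      = ((N-1).choose (k-1) : ℝ) * ∑ i, g i := by
  calc ∑ s ∈ (univ : Finset (Fin N)).powersetCard k, ∑ i ∈ s, g i
      = ∑ s ∈ (univ : Finset (Fin N)).powersetCard k, ∑ i : Fin N,
          if i ∈ s then g i else 0 := by
        exact sum_congr rfl fun s _ => sum_indicator s g
    _ = ∑ i : Fin N, ∑ s ∈ (univ : Finset (Fin N)).powersetCard k,
          if i ∈ s then g i else 0 := Finset.sum_comm
    _ = ∑ i : Fin N, ((N-1).choose (k-1) : ℝ) * g i := by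
        refine sum_congr rfl fun i _ => ?_
        rw [← Finset.sum_filter, Finset.sum_const, count_one hk i, nsmul_eq_mul]
    _ = _ := by rw [← Finset.mul_sum]

lemma sum_sq {N k : ℕ} (hk : 2 ≤ k) (g : Fin N → ℝ) :
    ∑ s ∈ (univ : Finset (Fin N)).powersetCard k, (∑ i ∈ s, g i)^2
      = ((N-2).choose (k-2) : ℝ) * (∑ i, g i)^2
        + (((N-1).choose (k-1) : ℝ) - ((N-2).choose (k-2) : ℝ)) * ∑ i, (g i)^2 := by
  have step1 : ∀ s : Finset (Fin N), (∑ i ∈ s, g i)^2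
      = ∑ i : Fin N, ∑ j : Fin N, (if i ∈ s ∧ j ∈ s then g i * g j else 0) := by
    intro s
    rw [sum_indicator s g, sq, Finset.sum_mul_sum]
    refine sum_congr rfl fun i _ => sum_congr rfl fun j _ => ?_
    by_cases his : i ∈ s <;> by_cases hjs : j ∈ s <;> simp [his, hjs]
  calc ∑ s ∈ (univ : Finset (Fin N)).powersetCard k, (∑ i ∈ s, g i)^2
      = ∑ i : Fin N, ∑ j : Fin N, ∑ s ∈ (univ : Finset (Fin N)).powersetCard k,
          (if i ∈ s ∧ j ∈ s then g i * g j else 0) := by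
        simp only [step1]
        rw [Finset.sum_comm]
        exact sum_congr rfl fun i _ => Finset.sum_comm
    _ = ∑ i : Fin N, ∑ j : Fin N,
          (if i = j then ((N-1).choose (k-1) : ℝ) else ((N-2).choose (k-2) : ℝ))
            * (g i * g j) := by
        refine sum_congr rfl fun i _ => sum_congr rfl fun j _ => ?_
        rw [← Finset.sum_filter, Finset.sum_const, nsmul_eq_mul]
        by_cases hij : i = j
        · subst hij
          simp only [if_pos rfl]
          congr 2
          have heq : (filter (fun a : Finset (Fin N) => i ∈ a ∧ i ∈ a)
              ((univ : Finset (Fin N)).powersetCard k))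
              = filter (fun a => i ∈ a) ((univ : Finset (Fin N)).powersetCard k) := by
            apply filter_congr; intro s _; simp
          rw [heq, count_one (by omega) i]
        · rw [if_neg hij, count_pair hk hij]
    _ = _ := by
        have expand : ∀ i j : Fin N,
            (if i = j then ((N-1).choose (k-1) : ℝ) else ((N-2).choose (k-2) : ℝ))
              * (g i * g j)
            = ((N-2).choose (k-2) : ℝ) * (g i * g j)
              + (if i = j then (((N-1).choose (k-1) : ℝ) - ((N-2).choose (k-2) : ℝ))
                  * (g i)^2 else 0) := by
          intro i j
          by_cases hij : i = j
          · subst hij; simp [sq]; ring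
          · simp [hij]
        simp only [expand, Finset.sum_add_distrib]
        congr 1
        · rw [sq, Finset.sum_mul_sum, Finset.mul_sum]
          refine sum_congr rfl fun i _ => ?_
          rw [Finset.mul_sum]
        · refine (sum_congr rfl fun i _ => ?_).trans (Finset.mul_sum _ _ _).symm
          rw [Finset.sum_ite_eq univ i (fun _ => _), if_pos (mem_univ i)]

lemma expand_sq {N : ℕ} (Y : Fin N → ℝ) (t : Finset (Fin N)) (c : ℝ) :
    ∑ i ∈ t, (Y i - c)^2
      = ∑ i ∈ t, (Y i)^2 - 2*c*(∑ i ∈ t, Y i) + (t.card : ℝ)*c^2 := by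
  rw [Finset.sum_congr rfl (fun i _ => sub_sq (Y i) c), Finset.sum_add_distrib,
    Finset.sum_sub_distrib, Finset.sum_const, nsmul_eq_mul, ← Finset.sum_mul,
    ← Finset.mul_sum]
  ring

lemma alg (x y P Q c1 c2 C : ℝ) (hx1 : x+1 ≠ 0) (hx2 : x+2 ≠ 0)
    (hy1 : y+1 ≠ 0) (hy2 : y+2 ≠ 0) (hC : C ≠ 0)
    (e1 : (y+2)*c1 = (x+2)*C) (e2 : (y+1)*c2 = (x+1)*c1) :
    (c1*Q - (c2*P^2 + (c1-c2)*Q)/(x+2)) / ((x+2)-1) / C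
    = (Q - 2*(P/(y+2))*P + (y+2)*(P/(y+2))^2) / ((y+2)-1) := by
  have h : (x+2)-1 = x+1 := by ring
  have h2 : (y+2)-1 = y+1 := by ring
  have hL : c1*Q - (c2*P^2 + (c1-c2)*Q)/(x+2)
      = ((x+2)*(c1*Q) - (c2*P^2 + (c1-c2)*Q))/(x+2) := by
    rw [sub_div, mul_div_cancel_left₀ _ hx2]
  have hR : Q - 2*(P/(y+2))*P + (y+2)*(P/(y+2))^2 = ((y+2)*Q - P^2)/(y+2) := by
    rw [div_pow, eq_div_iff hy2]
    field_simp
    ring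
  rw [h, h2, hL, hR, div_div, div_div, div_div, div_eq_div_iff
    (mul_ne_zero hx2 (mul_ne_zero hx1 hC)) (mul_ne_zero hy2 hy1)]
  linear_combination ((y+2)*(Q-P^2))*e2 + ((x+1)*((y+2)*Q-P^2))*e1

set_option maxHeartbeats 1000000 in
lemma key {N k : ℕ} (hk : 2 ≤ k) (hkN : k ≤ N) (Y : Fin N → ℝ) :
    (∑ s ∈ (univ : Finset (Fin N)).powersetCard k,
        (∑ i ∈ s, (Y i - (∑ j ∈ s, Y j) / (k:ℝ)) ^ 2) / ((k:ℝ) - 1))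
      / ((N.choose k : ℝ))
    = (∑ i, (Y i - (∑ j, Y j) / (N:ℝ)) ^ 2) / ((N:ℝ) - 1) := by
  obtain ⟨l, rfl⟩ : ∃ l, k = l + 2 := ⟨k - 2, by omega⟩
  obtain ⟨m, rfl⟩ : ∃ m, N = m + 2 := ⟨N - 2, by omega⟩
  have hml : l ≤ m := by omega
  have hkR : ((l + 2 : ℕ) : ℝ) = (l : ℝ) + 2 := by push_cast; ring
  have hNR : ((m + 2 : ℕ) : ℝ) = (m : ℝ) + 2 := by push_cast; ring
  have hk0 : ((l + 2 : ℕ) : ℝ) ≠ 0 := by rw [hkR]; positivity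
  set P := ∑ i : Fin (m+2), Y i with hP
  set Q := ∑ i : Fin (m+2), (Y i)^2 with hQ
  have hnum : ∀ s ∈ (univ : Finset (Fin (m+2))).powersetCard (l+2),
      (∑ i ∈ s, (Y i - (∑ j ∈ s, Y j)/((l+2:ℕ):ℝ))^2) / (((l+2:ℕ):ℝ) - 1)
      = (∑ i ∈ s, (Y i)^2 - (∑ i ∈ s, Y i)^2/((l+2:ℕ):ℝ)) / (((l+2:ℕ):ℝ) - 1) := by
    intro s hs
    have hcard : (s.card : ℝ) = ((l+2:ℕ):ℝ) := by
      rw [(Finset.mem_powersetCard.mp hs).2]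
    rw [expand_sq Y s _, hcard]
    congr 1
    field_simp
    ring
  rw [Finset.sum_congr rfl hnum, ← Finset.sum_div, Finset.sum_sub_distrib,
    ← Finset.sum_div, sum_one (by omega) (fun i => (Y i)^2), sum_sq (by omega) Y]
  have h1 : m + 2 - 1 = m + 1 := rfl
  have h2 : m + 2 - 2 = m := rfl
  have h3 : l + 2 - 1 = l + 1 := rfl
  have h4 : l + 2 - 2 = l := rfl
  rw [h1, h2, h3, h4, ← hP, ← hQ]
  set C : ℝ := (((m+2).choose (l+2) : ℕ) : ℝ) with hC
  set c1 : ℝ := (((m+1).choose (l+1) : ℕ) : ℝ) with hc1d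
  set c2 : ℝ := ((m.choose l : ℕ) : ℝ) with hc2d
  have hCpos : 0 < C := by
    rw [hC]
    exact_mod_cast Nat.choose_pos (by omega : l + 2 ≤ m + 2)
  have e1 : ((m : ℝ) + 2) * c1 = ((l : ℝ) + 2) * C := by
    have h : (m+2) * (m+1).choose (l+1) = (m+2).choose (l+2) * (l+2) :=
      Nat.add_one_mul_choose_eq (m+1) (l+1)
    have h' := congrArg (Nat.cast (R := ℝ)) h
    push_cast at h'
    rw [hc1d, hC]
    push_cast
    linarith [h']
  have e2 : ((m : ℝ) + 1) * c2 = ((l : ℝ) + 1) * c1 := by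
    have h : (m+1) * m.choose l = (m+1).choose (l+1) * (l+1) :=
      Nat.add_one_mul_choose_eq m l
    have h' := congrArg (Nat.cast (R := ℝ)) h
    push_cast at h'
    rw [hc1d, hc2d]
    push_cast
    linarith [h']
  have hm1 : (m : ℝ) + 1 ≠ 0 := by positivity
  have hm2 : (m : ℝ) + 2 ≠ 0 := by positivity
  have hl1 : (l : ℝ) + 1 ≠ 0 := by positivity
  rw [expand_sq Y univ (P / ((m+2:ℕ):ℝ)), card_univ, Fintype.card_fin, ← hP, ← hQ]
  rw [hkR, hNR]
  exact alg (l:ℝ) (m:ℝ) P Q c1 c2 C hl1 (by positivity) hm1 hm2 (ne_of_gt hCpos) e1 e2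


lemma sum_CRD_true (N N₁ : ℕ) (f : Finset (Fin N) → ℝ) :
    ∑ T ∈ CRD N N₁, f (univ.filter fun i => T i = true)
      = ∑ s ∈ (univ : Finset (Fin N)).powersetCard N₁, f s := by
  apply Finset.sum_nbij' (i := fun T => univ.filter fun i => T i = true)
    (j := fun s => fun x => decide (x ∈ s))
  · intro T hT
    simp only [CRD, mem_filter, mem_univ, true_and] at hT
    simp [mem_powersetCard, hT]
  · intro s hs
    simp only [mem_powersetCard] at hs
    simp only [CRD, mem_filter, mem_univ, true_and]
    rw [show (univ.filter fun i => decide (i ∈ s) = true) = s by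
      ext x; simp]
    exact hs.2
  · intro T hT
    funext x
    simp
  · intro s hs
    ext x
    simp
  · intro T hT
    rfl

lemma sum_CRD_false (N N₁ : ℕ) (hN : N₁ ≤ N) (f : Finset (Fin N) → ℝ) :
    ∑ T ∈ CRD N N₁, f (univ.filter fun i => T i = false)
      = ∑ s ∈ (univ : Finset (Fin N)).powersetCard (N - N₁), f s := by
  apply Finset.sum_nbij' (i := fun T => univ.filter fun i => T i = false)
    (j := fun s => fun x => decide (x ∉ s))
  · intro T hT
    simp only [CRD, mem_filter, mem_univ, true_and] at hT
    simp only [mem_powersetCard]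
    refine ⟨subset_univ _, ?_⟩
    have := Finset.card_filter_add_card_filter_not
      (s := (univ : Finset (Fin N))) (p := fun i => T i = true)
    simp only [card_univ, Fintype.card_fin] at this
    have h2 : (univ.filter fun i => ¬ T i = true) = (univ.filter fun i => T i = false) := by
      ext x; simp
    rw [hT, h2] at this
    omega
  · intro s hs
    simp only [mem_powersetCard] at hs
    simp only [CRD, mem_filter, mem_univ, true_and]
    rw [show (univ.filter fun i => decide (i ∉ s) = true) = univ \ s by
      ext x; simp]
    rw [Finset.card_sdiff_of_subset (subset_univ s), card_univ, Fintype.card_fin, hs.2]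
    omega
  · intro T hT
    funext x
    simp
  · intro s hs
    ext x
    simp
  · intro T hT
    rfl

lemma CRD_card (N N₁ : ℕ) : ((CRD N N₁).card : ℝ) = (N.choose N₁ : ℝ) := by
  have h := sum_CRD_true N N₁ (fun _ => (1:ℝ))
  simp only [Finset.sum_const, nsmul_eq_mul, mul_one] at h
  rw [h, Finset.card_powersetCard, card_univ, Fintype.card_fin]

theorem stmt5aux (N N₁ : ℕ) (h1 : 2 ≤ N₁) (h2 : N₁ ≤ N - 2) (Y1 Y0 : Fin N → ℝ) :
    (∑ T ∈ CRD N N₁,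
        ((∑ i, if T i then (Y1 i - (∑ i, if T i then Y1 i else 0) / (N₁ : ℝ)) ^ 2 else 0)
          / ((N₁ : ℝ) - 1))) / ((CRD N N₁).card : ℝ)
      = (∑ i, (Y1 i - (∑ j, Y1 j) / (N : ℝ)) ^ 2) / ((N : ℝ) - 1) ∧
    (∑ T ∈ CRD N N₁,
        ((∑ i, if T i then 0 else (Y0 i - (∑ i, if T i then 0 else Y0 i) / ((N - N₁ : ℕ) : ℝ)) ^ 2)
          / (((N - N₁ : ℕ) : ℝ) - 1))) / ((CRD N N₁).card : ℝ)
      = (∑ i, (Y0 i - (∑ j, Y0 j) / (N : ℝ)) ^ 2) / ((N : ℝ) - 1) := by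
  have hN : N₁ + 2 ≤ N := by omega
  constructor
  · rw [CRD_card]
    have hsum : ∑ T ∈ CRD N N₁,
        ((∑ i, if T i then (Y1 i - (∑ i, if T i then Y1 i else 0) / (N₁ : ℝ)) ^ 2 else 0)
          / ((N₁ : ℝ) - 1))
        = ∑ s ∈ (univ : Finset (Fin N)).powersetCard N₁,
            (∑ i ∈ s, (Y1 i - (∑ j ∈ s, Y1 j) / (N₁:ℝ)) ^ 2) / ((N₁:ℝ) - 1) := by
      rw [← sum_CRD_true N N₁
        (fun s => (∑ i ∈ s, (Y1 i - (∑ j ∈ s, Y1 j) / (N₁:ℝ)) ^ 2) / ((N₁:ℝ) - 1))]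
      refine sum_congr rfl fun T _ => ?_
      rw [Finset.sum_filter, Finset.sum_filter]
    rw [hsum]
    exact key (by omega) (by omega) Y1
  · rw [CRD_card]
    have hchoose : ((N.choose N₁ : ℕ) : ℝ) = ((N.choose (N - N₁) : ℕ) : ℝ) := by
      exact_mod_cast congrArg (Nat.cast (R := ℝ)) (Nat.choose_symm (by omega : N₁ ≤ N)).symm
    have hsum : ∑ T ∈ CRD N N₁,
        ((∑ i, if T i then 0 else (Y0 i - (∑ i, if T i then 0 else Y0 i) / ((N - N₁ : ℕ) : ℝ)) ^ 2)
          / (((N - N₁ : ℕ) : ℝ) - 1))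
        = ∑ s ∈ (univ : Finset (Fin N)).powersetCard (N - N₁),
            (∑ i ∈ s, (Y0 i - (∑ j ∈ s, Y0 j) / (((N - N₁ : ℕ)):ℝ)) ^ 2)
              / ((((N - N₁ : ℕ)):ℝ) - 1) := by
      rw [← sum_CRD_false N N₁ (by omega)
        (fun s => (∑ i ∈ s, (Y0 i - (∑ j ∈ s, Y0 j) / (((N - N₁ : ℕ)):ℝ)) ^ 2)
          / ((((N - N₁ : ℕ)):ℝ) - 1))]
      refine sum_congr rfl fun T _ => ?_
      rw [Finset.sum_filter, Finset.sum_filter]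
      congr 1
      refine sum_congr rfl fun i _ => ?_
      have hinner : (∑ x, if T x = true then (0:ℝ) else Y0 x)
          = ∑ a, if T a = false then Y0 a else 0 :=
        Finset.sum_congr rfl fun a _ => by cases hT : T a <;> simp [hT]
      cases hT : T i <;> simp [hT, hinner]
    rw [hsum, hchoose]
    exact key (by omega) (by omega) Y0


/-- In a completely randomized experiment with `2 ≤ N₁ ≤ N−2`,
the within-group sample variances are unbiased for the corresponding finite
population variances: `E[s_t²] = S_t²` for `t = 1` and `t = 0`. -/
theorem stmt5 (N N₁ : ℕ) (h1 : 2 ≤ N₁) (h2 : N₁ ≤ N - 2) (Y1 Y0 : Fin N → ℝ) :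
    crdExp N N₁ (s1sq N N₁ Y1)
      = (∑ i, (Y1 i - (∑ j, Y1 j) / (N : ℝ)) ^ 2) / ((N : ℝ) - 1) ∧
    crdExp N N₁ (s0sq N N₁ Y0)
      = (∑ i, (Y0 i - (∑ j, Y0 j) / (N : ℝ)) ^ 2) / ((N : ℝ) - 1) := by
  unfold crdExp s1sq s0sq ybar1obs ybar0obs
  exact stmt5aux N N₁ h1 h2 Y1 Y0
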